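/- arXiv:math/0411539 — 2 statements merged into one kernel-verified Lean document; each statement's English description precedes it below -/
import Mathlib

section
/- For every real H with 0 < H < 1, the integral over (0,∞) of λ^{-2H-1} sin²(aλ/2) dλ equals π a^{2H} / (4 Γ(2H+1) sin(πH)) for every a > 0. -/
open Real MeasureTheory Set Filter Topology



section aux

/-- Generalized Gamma integral: integrability. -/
lemma intLA {u b : ℝ} (hu : -1 < u) (hb : 0 < b) :
    IntegrableOn (fun x : ℝ => x ^ u * Real.exp (-(b * x))) (Ioi 0) := by
  have := integrableOn_rpow_mul_exp_neg_mul_rpow (p := 1) (s := u) (b := b) hu zero_lt_one hb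
  simpa [Real.rpow_one, neg_mul] using this

/-- Generalized Gamma integral: value. -/
lemma valLA {u b : ℝ} (hu : -1 < u) (hb : 0 < b) :
    ∫ x in Ioi 0, x ^ u * Real.exp (-(b * x)) = Real.Gamma (u + 1) / b ^ (u + 1) := by
  have h := MeasureTheory.integral_comp_mul_left_Ioi
    (fun x => Real.exp (-x) * x ^ (u + 1 - 1)) 0 hb
  simp only [mul_zero] at h
  rw [← Real.Gamma_eq_integral (by linarith : (0:ℝ) < u + 1)] at h
  have h2 : ∀ x ∈ Ioi (0:ℝ), Real.exp (-(b * x)) * (b * x) ^ (u + 1 - 1)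
      = b ^ u * (x ^ u * Real.exp (-(b * x))) := by
    intro x hx
    rw [Real.mul_rpow hb.le (le_of_lt hx)]
    have : u + 1 - 1 = u := by ring
    rw [this]; ring
  rw [setIntegral_congr_fun measurableSet_Ioi h2, MeasureTheory.integral_const_mul] at h
  have hbu : (0:ℝ) < b ^ u := Real.rpow_pos_of_pos hb u
  have hb1 : b ^ (u + 1) = b ^ u * b := by
    rw [Real.rpow_add hb, Real.rpow_one]
  rw [hb1]
  simp only [smul_eq_mul] at h
  field_simp at h ⊢
  linarith [h]

lemma valExp {b : ℝ} (hb : 0 < b) :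
    ∫ x in Ioi 0, Real.exp (-(b * x)) = 1 / b := by
  have h := valLA (u := 0) (by norm_num) hb
  simpa using h

lemma intExp {b : ℝ} (hb : 0 < b) :
    IntegrableOn (fun x : ℝ => Real.exp (-(b * x))) (Ioi 0) := by
  have h := intLA (u := 0) (by norm_num) hb
  simpa using h

end aux




lemma intLC {a t : ℝ} (ht : 0 < t) :
    IntegrableOn (fun l : ℝ => Real.exp (-(t * l)) * Real.sin (a * l / 2) ^ 2) (Ioi 0) := by
  refine Integrable.mono' (intExp ht) ?_ ?_
  · exact (((Real.continuous_exp.comp ((continuous_const.mul continuous_id).neg)).mul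
      ((Real.continuous_sin.comp ((continuous_const.mul continuous_id).div_const 2)).pow 2)).aestronglyMeasurable).restrict
  · filter_upwards with l
    have h1 : Real.sin (a * l / 2) ^ 2 ≤ 1 := by
      have := Real.neg_one_le_sin (a * l / 2)
      have := Real.sin_le_one (a * l / 2)
      nlinarith
    have h0 : (0:ℝ) ≤ Real.sin (a * l / 2) ^ 2 := sq_nonneg _
    have he : (0:ℝ) < Real.exp (-(t * l)) := Real.exp_pos _
    rw [Real.norm_eq_abs, abs_of_nonneg (by positivity)]
    nlinarith

lemma valLC {a t : ℝ} (ht : 0 < t) :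
    ∫ l in Ioi 0, Real.exp (-(t * l)) * Real.sin (a * l / 2) ^ 2
      = a ^ 2 / (2 * t * (t ^ 2 + a ^ 2)) := by
  set c : ℝ := t ^ 2 + a ^ 2 with hc
  have hcpos : 0 < c := by positivity
  set F : ℝ → ℝ := fun l =>
    -Real.exp (-(t * l)) / (2 * t)
      + Real.exp (-(t * l)) * (t * Real.cos (a * l) - a * Real.sin (a * l)) / (2 * c) with hF
  have hderiv : ∀ l : ℝ, HasDerivAt F (Real.exp (-(t * l)) * Real.sin (a * l / 2) ^ 2) l := by
    intro l
    have hid : HasDerivAt (fun l : ℝ => t * l) t l := by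
      simpa using (hasDerivAt_id l).const_mul t
    have haid : HasDerivAt (fun l : ℝ => a * l) a l := by
      simpa using (hasDerivAt_id l).const_mul a
    have hexp : HasDerivAt (fun l : ℝ => Real.exp (-(t * l))) (Real.exp (-(t * l)) * -t) l :=
      (hid.neg).exp
    have hcos : HasDerivAt (fun l : ℝ => Real.cos (a * l)) (-Real.sin (a * l) * a) l := haid.cos
    have hsin : HasDerivAt (fun l : ℝ => Real.sin (a * l)) (Real.cos (a * l) * a) l := haid.sin
    have h2 : HasDerivAt (fun l : ℝ => t * Real.cos (a * l) - a * Real.sin (a * l))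
        (t * (-Real.sin (a * l) * a) - a * (Real.cos (a * l) * a)) l :=
      (hcos.const_mul t).sub (hsin.const_mul a)
    have hD := ((hexp.neg.div_const (2 * t))).add ((hexp.mul h2).div_const (2 * c))
    refine hD.congr_deriv ?_
    have hsq : Real.sin (a * l / 2) ^ 2 = 1 / 2 - Real.cos (2 * (a * l / 2)) / 2 :=
      Real.sin_sq_eq_half_sub _
    have h2x : 2 * (a * l / 2) = a * l := by ring
    rw [h2x] at hsq
    rw [hsq, hc]
    field_simp
    ring
  have he : Tendsto (fun l : ℝ => Real.exp (-(t * l))) atTop (𝓝 0) := by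
    apply Real.tendsto_exp_atBot.comp
    exact (tendsto_neg_atBot_iff.mpr ((tendsto_const_mul_atTop_of_pos ht).mpr tendsto_id))
  have htop : Tendsto F atTop (𝓝 0) := by
    have h1 : Tendsto (fun l : ℝ => -Real.exp (-(t * l)) / (2 * t)) atTop (𝓝 0) := by
      have := (he.neg).div_const (2 * t)
      simpa using this
    have h2 : Tendsto (fun l : ℝ =>
        Real.exp (-(t * l)) * (t * Real.cos (a * l) - a * Real.sin (a * l)) / (2 * c))
        atTop (𝓝 0) := by
      rw [tendsto_zero_iff_norm_tendsto_zero]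
      apply squeeze_zero (g := fun l => (|t| + |a|) / (2 * c) * Real.exp (-(t * l)))
        (fun l => norm_nonneg _)
      · intro l
        rw [Real.norm_eq_abs, abs_div, abs_mul]
        rw [abs_of_pos (by positivity : (0:ℝ) < 2 * c)]
        have hb : |t * Real.cos (a * l) - a * Real.sin (a * l)| ≤ |t| + |a| := by
          calc |t * Real.cos (a * l) - a * Real.sin (a * l)|
              ≤ |t * Real.cos (a * l)| + |a * Real.sin (a * l)| := abs_sub _ _
            _ ≤ |t| * 1 + |a| * 1 := by
                rw [abs_mul, abs_mul]
                gcongr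
                · exact Real.abs_cos_le_one _
                · exact Real.abs_sin_le_one _
            _ = |t| + |a| := by ring
        have hexp0 : (0:ℝ) ≤ Real.exp (-(t * l)) := (Real.exp_pos _).le
        rw [abs_of_nonneg hexp0]
        rw [div_le_iff₀ (by positivity)]
        calc Real.exp (-(t * l)) * |t * Real.cos (a * l) - a * Real.sin (a * l)|
            ≤ Real.exp (-(t * l)) * (|t| + |a|) := by gcongr
          _ = (|t| + |a|) / (2 * c) * Real.exp (-(t * l)) * (2 * c) := by
              field_simp
      · simpa using he.const_mul ((|t| + |a|) / (2 * c))
    simpa using h1.add h2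
  have key := integral_Ioi_of_hasDerivAt_of_tendsto' (f := F)
    (f' := fun l => Real.exp (-(t * l)) * Real.sin (a * l / 2) ^ 2)
    (fun x _ => hderiv x) (intLC ht) htop
  rw [key, hF]
  simp only [mul_zero, neg_zero, Real.exp_zero, Real.cos_zero, Real.sin_zero]
  rw [hc]
  field_simp
  ring




lemma intLB {H s : ℝ} (hH : 0 < H) (hs : 0 < s) :
    IntegrableOn (fun t : ℝ => t ^ (2 * H - 1) * Real.exp (-(s * t ^ 2))) (Ioi 0) := by
  have := integrableOn_rpow_mul_exp_neg_mul_rpow (p := 2) (s := 2 * H - 1) (b := s)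
    (by linarith) two_pos hs
  apply this.congr_fun ?_ measurableSet_Ioi
  intro x hx
  simp only [Real.rpow_two, neg_mul]

lemma valLB {H s : ℝ} (hH0 : 0 < H) (hs : 0 < s) :
    ∫ t in Ioi 0, t ^ (2 * H - 1) * Real.exp (-(s * t ^ 2))
      = Real.Gamma H / (2 * s ^ H) := by
  have key := MeasureTheory.integral_comp_rpow_Ioi_of_pos
    (g := fun y : ℝ => y ^ (H - 1) * Real.exp (-(s * y))) (p := 2) two_pos
  have h1 : ∀ x ∈ Ioi (0:ℝ), (2 * x ^ ((2:ℝ) - 1)) •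
        ((x ^ (2:ℝ)) ^ (H - 1) * Real.exp (-(s * x ^ (2:ℝ))))
      = 2 * (x ^ (2 * H - 1) * Real.exp (-(s * x ^ 2))) := by
    intro x hx
    have hx0 : (0:ℝ) < x := hx
    rw [← Real.rpow_natCast x 2] at *
    rw [← Real.rpow_mul hx0.le]
    have e1 : (2:ℝ) - 1 = 1 := by norm_num
    rw [e1, Real.rpow_one]
    rw [smul_eq_mul]
    rw [show ((2:ℕ):ℝ) = (2:ℝ) by norm_num]
    rw [show (2:ℝ) * (H - 1) = 2 * H - 2 by ring]
    rw [show (2:ℝ) * x * (x ^ (2 * H - 2) * Real.exp (-(s * x ^ (2:ℝ))))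
      = 2 * ((x * x ^ (2 * H - 2)) * Real.exp (-(s * x ^ (2:ℝ)))) by ring]
    congr 2
    rw [show (2:ℝ) * H - 1 = 1 + (2 * H - 2) by ring, Real.rpow_add hx0, Real.rpow_one]
  rw [setIntegral_congr_fun measurableSet_Ioi h1] at key
  rw [MeasureTheory.integral_const_mul] at key
  have hval := valLA (u := H - 1) (b := s) (by linarith) hs
  rw [show H - 1 + 1 = H by ring] at hval
  rw [hval] at key
  have : ∫ t in Ioi 0, t ^ (2 * H - 1) * Real.exp (-(s * t ^ 2))
      = (Real.Gamma H / s ^ H) / 2 := by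
    field_simp at key ⊢
    linarith
  rw [this]
  ring



lemma L0meas {H a : ℝ} : Measurable (fun l : ℝ => l ^ (-2 * H - 1) * Real.sin (a * l / 2) ^ 2) := by
  fun_prop

lemma L0 {H a : ℝ} (hH0 : 0 < H) (hH1 : H < 1) :
    IntegrableOn (fun l : ℝ => l ^ (-2 * H - 1) * Real.sin (a * l / 2) ^ 2) (Ioi 0) := by
  have hsplit : Ioi (0:ℝ) = Ioc 0 1 ∪ Ioi 1 := (Set.Ioc_union_Ioi_eq_Ioi zero_le_one).symm
  rw [hsplit, integrableOn_union]
  constructor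
  · -- near zero : bound by (a/2)^2 * l^(1-2H)
    have hint : IntegrableOn (fun l : ℝ => (a / 2) ^ 2 * l ^ (1 - 2 * H)) (Ioc 0 1) := by
      apply Integrable.const_mul
      have : IntervalIntegrable (fun l : ℝ => l ^ (1 - 2 * H)) volume 0 1 :=
        intervalIntegral.intervalIntegrable_rpow' (by linarith)
      exact (intervalIntegrable_iff_integrableOn_Ioc_of_le zero_le_one).mp this
    refine Integrable.mono' hint (L0meas.aestronglyMeasurable.restrict) ?_
    filter_upwards [ae_restrict_mem measurableSet_Ioc] with l hl
    obtain ⟨hl0, hl1⟩ := hl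
    have hsin : |Real.sin (a * l / 2)| ≤ |a * l / 2| := Real.abs_sin_le_abs
    have hsq : Real.sin (a * l / 2) ^ 2 ≤ (a * l / 2) ^ 2 := by
      rw [← sq_abs, ← sq_abs (a * l / 2)]
      exact pow_le_pow_left₀ (abs_nonneg _) hsin 2
    have hpow : (0:ℝ) < l ^ (-2 * H - 1) := Real.rpow_pos_of_pos hl0 _
    rw [Real.norm_eq_abs, abs_of_nonneg (by positivity)]
    calc l ^ (-2 * H - 1) * Real.sin (a * l / 2) ^ 2
        ≤ l ^ (-2 * H - 1) * (a * l / 2) ^ 2 := by gcongr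
      _ = (a / 2) ^ 2 * (l ^ (-2 * H - 1) * l ^ 2) := by ring
      _ = (a / 2) ^ 2 * l ^ (1 - 2 * H) := by
          congr 1
          rw [← Real.rpow_two, ← Real.rpow_add hl0]
          congr 1
          ring
  · -- near infinity : bound by l ^ (-2H-1)
    have hint : IntegrableOn (fun l : ℝ => l ^ (-2 * H - 1)) (Ioi 1) :=
      integrableOn_Ioi_rpow_of_lt (by linarith) zero_lt_one
    refine Integrable.mono' hint (L0meas.aestronglyMeasurable.restrict) ?_
    filter_upwards [ae_restrict_mem measurableSet_Ioi] with l hl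
    have hl0 : (0:ℝ) < l := lt_trans zero_lt_one hl
    have hpow : (0:ℝ) < l ^ (-2 * H - 1) := Real.rpow_pos_of_pos hl0 _
    have hsq : Real.sin (a * l / 2) ^ 2 ≤ 1 := by
      have := Real.neg_one_le_sin (a * l / 2)
      have := Real.sin_le_one (a * l / 2)
      nlinarith
    rw [Real.norm_eq_abs, abs_of_nonneg (by positivity)]
    nlinarith [sq_nonneg (Real.sin (a * l / 2))]




/-- For `0 < H < 1` and `a > 0`,
`∫₀^∞ λ^{-2H-1} sin²(aλ/2) dλ = π a^{2H} / (4 Γ(2H+1) sin(πH))`. -/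
theorem integral_rpow_sin_sq (H a : ℝ) (hH0 : 0 < H) (hH1 : H < 1) (ha : 0 < a) :
    ∫ l in Set.Ioi (0 : ℝ), l ^ (-2 * H - 1) * Real.sin (a * l / 2) ^ 2
      = π * a ^ (2 * H) / (4 * Real.Gamma (2 * H + 1) * Real.sin (π * H)) := by
  set G : ℝ := Real.Gamma (2 * H + 1) with hG
  have hGpos : 0 < G := Real.Gamma_pos_of_pos (by linarith)
  have hSpos : 0 < Real.sin (π * H) := by
    apply Real.sin_pos_of_pos_of_lt_pi (by positivity)
    calc π * H < π * 1 := by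
          exact mul_lt_mul_of_pos_left hH1 Real.pi_pos
      _ = π := mul_one π
  set f : ℝ → ℝ → ℝ := fun l t => Real.sin (a * l / 2) ^ 2 * (t ^ (2 * H) * Real.exp (-(l * t)))
    with hf
  -- inner integral over t
  have hinner : ∀ l ∈ Ioi (0:ℝ),
      ∫ t in Ioi 0, f l t = G * (l ^ (-2 * H - 1) * Real.sin (a * l / 2) ^ 2) := by
    intro l hl
    have hl0 : (0:ℝ) < l := hl
    have hv := valLA (u := 2 * H) (b := l) (by linarith) hl0
    rw [hf]
    rw [MeasureTheory.integral_const_mul, hv]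
    rw [show -2 * H - 1 = -(2 * H + 1) by ring, Real.rpow_neg hl0.le]
    field_simp
    ring
  -- Fubini no. 1
  have meas1 : Measurable (Function.uncurry f) := by
    have : Measurable (fun p : ℝ × ℝ =>
        Real.sin (a * p.1 / 2) ^ 2 * (p.2 ^ (2 * H) * Real.exp (-(p.1 * p.2)))) := by fun_prop
    exact this
  have hInt1 : Integrable (Function.uncurry f)
      ((volume.restrict (Ioi 0)).prod (volume.restrict (Ioi 0))) := by
    rw [MeasureTheory.integrable_prod_iff meas1.aestronglyMeasurable]
    constructor
    · filter_upwards [ae_restrict_mem measurableSet_Ioi] with l hl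
      have : IntegrableOn
          (fun t : ℝ => Real.sin (a * l / 2) ^ 2 * (t ^ (2 * H) * Real.exp (-(l * t))))
          (Ioi 0) := (intLA (u := 2 * H) (by linarith) hl).const_mul _
      exact this
    · apply Integrable.congr ((L0 hH0 hH1 (a := a)).const_mul G)
      filter_upwards [ae_restrict_mem measurableSet_Ioi] with l hl
      simp only [Function.uncurry_apply_pair]
      have h1 : ∫ t in Ioi 0, ‖f l t‖ = ∫ t in Ioi 0, f l t := by
        apply setIntegral_congr_fun measurableSet_Ioi
        intro t ht
        have ht0 : (0:ℝ) ≤ t ^ (2 * H) := Real.rpow_nonneg (le_of_lt ht) _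
        show ‖Real.sin (a * l / 2) ^ 2 * (t ^ (2 * H) * Real.exp (-(l * t)))‖
            = Real.sin (a * l / 2) ^ 2 * (t ^ (2 * H) * Real.exp (-(l * t)))
        rw [Real.norm_eq_abs, abs_of_nonneg]
        exact mul_nonneg (sq_nonneg _) (mul_nonneg ht0 (Real.exp_pos _).le)
      rw [h1, hinner l hl]
  have swap1 : ∫ l in Ioi (0:ℝ), ∫ t in Ioi (0:ℝ), f l t = ∫ t in Ioi (0:ℝ), ∫ l in Ioi (0:ℝ), f l t :=
    MeasureTheory.integral_integral_swap hInt1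
  -- inner integral over l, for fixed t
  have hinner2 : ∀ t ∈ Ioi (0:ℝ),
      ∫ l in Ioi 0, f l t = (a ^ 2 / 2) * (t ^ (2 * H - 1) * ((t ^ 2 + a ^ 2))⁻¹) := by
    intro t ht
    have ht0 : (0:ℝ) < t := ht
    have : ∀ l : ℝ, f l t = t ^ (2 * H) * (Real.exp (-(t * l)) * Real.sin (a * l / 2) ^ 2) := by
      intro l
      show Real.sin (a * l / 2) ^ 2 * (t ^ (2 * H) * Real.exp (-(l * t)))
          = t ^ (2 * H) * (Real.exp (-(t * l)) * Real.sin (a * l / 2) ^ 2)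
      rw [mul_comm l t]; ring
    simp only [this]
    rw [MeasureTheory.integral_const_mul, valLC ht0]
    rw [show 2 * H - 1 = 2 * H + (-1) by ring, Real.rpow_add ht0, Real.rpow_neg_one]
    field_simp
  -- the J integral
  set g : ℝ → ℝ → ℝ := fun t s =>
    (t ^ (2 * H - 1) * Real.exp (-(s * t ^ 2))) * Real.exp (-(s * a ^ 2)) with hg
  have hginner : ∀ t ∈ Ioi (0:ℝ),
      ∫ s in Ioi 0, g t s = t ^ (2 * H - 1) * ((t ^ 2 + a ^ 2))⁻¹ := by
    intro t ht
    have ht0 : (0:ℝ) < t := ht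
    have hb : (0:ℝ) < t ^ 2 + a ^ 2 := by positivity
    have : ∀ s : ℝ, g t s = t ^ (2 * H - 1) * Real.exp (-((t ^ 2 + a ^ 2) * s)) := by
      intro s
      show (t ^ (2 * H - 1) * Real.exp (-(s * t ^ 2))) * Real.exp (-(s * a ^ 2))
          = t ^ (2 * H - 1) * Real.exp (-((t ^ 2 + a ^ 2) * s))
      rw [mul_assoc, ← Real.exp_add]
      congr 2
      ring
    simp only [this]
    rw [MeasureTheory.integral_const_mul, valExp hb]
    field_simp
  have meas2 : Measurable (Function.uncurry g) := by
    have : Measurable (fun p : ℝ × ℝ =>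
        (p.1 ^ (2 * H - 1) * Real.exp (-(p.2 * p.1 ^ 2))) * Real.exp (-(p.2 * a ^ 2))) := by
      fun_prop
    exact this
  have hInt2 : Integrable (Function.uncurry g)
      ((volume.restrict (Ioi 0)).prod (volume.restrict (Ioi 0))) := by
    rw [MeasureTheory.integrable_prod_iff' meas2.aestronglyMeasurable]
    constructor
    · filter_upwards [ae_restrict_mem measurableSet_Ioi] with s hs
      have : IntegrableOn
          (fun t : ℝ => (t ^ (2 * H - 1) * Real.exp (-(s * t ^ 2))) * Real.exp (-(s * a ^ 2)))
          (Ioi 0) := (intLB hH0 hs).mul_const _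
      exact this
    · -- marginal over t equals (Gamma H / (2 s^H)) * exp (-(s a^2))
      have base : IntegrableOn
          (fun s : ℝ => (Real.Gamma H / 2) * (s ^ (-H) * Real.exp (-(a ^ 2 * s)))) (Ioi 0) :=
        (intLA (u := -H) (by linarith) (by positivity)).const_mul _
      apply Integrable.congr base
      filter_upwards [ae_restrict_mem measurableSet_Ioi] with s hs
      simp only [Function.uncurry_apply_pair]
      have hs0 : (0:ℝ) < s := hs
      have h1 : ∫ t in Ioi 0, ‖g t s‖ = ∫ t in Ioi 0, g t s := by
        apply setIntegral_congr_fun measurableSet_Ioi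
        intro t ht
        have ht0 : (0:ℝ) ≤ t ^ (2 * H - 1) := Real.rpow_nonneg (le_of_lt ht) _
        show ‖(t ^ (2 * H - 1) * Real.exp (-(s * t ^ 2))) * Real.exp (-(s * a ^ 2))‖
            = (t ^ (2 * H - 1) * Real.exp (-(s * t ^ 2))) * Real.exp (-(s * a ^ 2))
        rw [Real.norm_eq_abs, abs_of_nonneg]
        exact mul_nonneg (mul_nonneg ht0 (Real.exp_pos _).le) (Real.exp_pos _).le
      have h2 : ∫ t in Ioi 0, g t s
          = (Real.Gamma H / (2 * s ^ H)) * Real.exp (-(s * a ^ 2)) := by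
        rw [hg]
        rw [MeasureTheory.integral_mul_const, valLB hH0 hs0]
      rw [h1, h2]
      rw [Real.rpow_neg hs0.le, mul_comm (a ^ 2) s]
      field_simp
  have swap2 : ∫ t in Ioi (0:ℝ), ∫ s in Ioi (0:ℝ), g t s = ∫ s in Ioi (0:ℝ), ∫ t in Ioi (0:ℝ), g t s :=
    MeasureTheory.integral_integral_swap hInt2
  -- compute RHS of swap2
  have hJ2 : ∫ s in Ioi (0:ℝ), ∫ t in Ioi (0:ℝ), g t s
      = (Real.Gamma H * Real.Gamma (1 - H) / 2) * ((a ^ 2) ^ (1 - H))⁻¹ := by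
    have h1 : ∀ s ∈ Ioi (0:ℝ), ∫ t in Ioi (0:ℝ), g t s
        = (Real.Gamma H / 2) * (s ^ (-H) * Real.exp (-(a ^ 2 * s))) := by
      intro s hs
      have hs0 : (0:ℝ) < s := hs
      rw [hg, MeasureTheory.integral_mul_const, valLB hH0 hs0]
      rw [Real.rpow_neg hs0.le, mul_comm (a ^ 2) s]
      field_simp
    rw [setIntegral_congr_fun measurableSet_Ioi h1, MeasureTheory.integral_const_mul]
    have hv := valLA (u := -H) (b := a ^ 2) (by linarith) (by positivity)
    rw [show -H + 1 = 1 - H by ring] at hv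
    rw [hv]
    field_simp
  -- put everything together
  set I : ℝ := ∫ l in Set.Ioi (0 : ℝ), l ^ (-2 * H - 1) * Real.sin (a * l / 2) ^ 2 with hI
  have key : G * I = ∫ l in Ioi (0:ℝ), ∫ t in Ioi (0:ℝ), f l t := by
    rw [hI, ← MeasureTheory.integral_const_mul]
    symm
    apply setIntegral_congr_fun measurableSet_Ioi
    intro l hl
    exact hinner l hl
  have key2 : ∫ t in Ioi (0:ℝ), ∫ l in Ioi (0:ℝ), f l t
      = (a ^ 2 / 2) * ∫ t in Ioi (0:ℝ), t ^ (2 * H - 1) * ((t ^ 2 + a ^ 2))⁻¹ := by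
    rw [← MeasureTheory.integral_const_mul]
    apply setIntegral_congr_fun measurableSet_Ioi
    intro t ht
    exact hinner2 t ht
  have key3 : ∫ t in Ioi (0:ℝ), t ^ (2 * H - 1) * ((t ^ 2 + a ^ 2))⁻¹
      = ∫ t in Ioi (0:ℝ), ∫ s in Ioi (0:ℝ), g t s := by
    symm
    apply setIntegral_congr_fun measurableSet_Ioi
    intro t ht
    exact hginner t ht
  have hrefl : Real.Gamma H * Real.Gamma (1 - H) = π / Real.sin (π * H) :=
    Real.Gamma_mul_Gamma_one_sub H
  have hapow : (a ^ 2 : ℝ) * (((a ^ 2) ^ (1 - H) : ℝ))⁻¹ = a ^ (2 * H) := by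
    rw [← Real.rpow_natCast a 2, ← Real.rpow_mul ha.le, ← Real.rpow_neg ha.le,
      ← Real.rpow_add ha]
    congr 1
    push_cast
    ring
  have final : G * I = π * a ^ (2 * H) / (4 * Real.sin (π * H)) := by
    rw [key, swap1, key2, key3, swap2, hJ2, hrefl]
    have h2 : (a ^ 2 / 2) * ((π / Real.sin (π * H) / 2) * ((a ^ 2) ^ (1 - H))⁻¹)
        = (π / (4 * Real.sin (π * H))) * (a ^ 2 * (((a ^ 2) ^ (1 - H)))⁻¹) := by
      field_simp
      ring
    rw [h2, hapow]
    field_simp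
  have : I = π * a ^ (2 * H) / (4 * Real.sin (π * H)) / G := by
    field_simp at final ⊢
    linarith [final]
  rw [this]
  field_simp
end

section
/- For 0 < H < 1, N ≥ 2 an integer, and x ∈ ℝ^N with x ≠ 0, the integral c²_{HN} ∫_{ℝ^N} (1 - cos⟨p,x⟩) ‖p‖^{-N-2H} dp equals (1/2)‖x‖^{2H}, where c²_{HN} = 2^{2H-1} Γ(H+N/2) Γ(H+1) sin(πH) / π^{(N+2)/2}. -/
open Real MeasureTheory Set Filter
open scoped Topology RealInnerProductSpace

section SpectralAux

variable {n : ℕ}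

local notation "E" => EuclideanSpace ℝ (Fin n)

-- integrability of u^(-H-1) (1 - e^{-u}) on (0,∞)
lemma intM {H : ℝ} (hH0 : 0 < H) (hH1 : H < 1) :
    IntegrableOn (fun u : ℝ => u ^ (-H - 1) * (1 - Real.exp (-u))) (Ioi 0) := by
  have hmeas : AEStronglyMeasurable (fun u : ℝ => u ^ (-H - 1) * (1 - Real.exp (-u)))
      (volume.restrict (Ioi (0:ℝ))) := by
    apply Measurable.aestronglyMeasurable; fun_prop
  have h01 : IntegrableOn (fun u : ℝ => u ^ (-H - 1) * (1 - Real.exp (-u))) (Ioc 0 1) := by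
    have hg : IntegrableOn (fun u : ℝ => u ^ (-H)) (Ioc (0:ℝ) 1) := by
      rw [← intervalIntegrable_iff_integrableOn_Ioc_of_le zero_le_one]
      exact intervalIntegral.intervalIntegrable_rpow' (by linarith)
    refine Integrable.mono' hg (hmeas.mono_measure (Measure.restrict_mono Ioc_subset_Ioi_self le_rfl)) ?_
    filter_upwards [ae_restrict_mem measurableSet_Ioc] with u hu
    have hu0 : 0 < u := hu.1
    have h1 : 1 - Real.exp (-u) ≤ u := by nlinarith [Real.add_one_le_exp (-u)]
    have h2 : 0 ≤ 1 - Real.exp (-u) := by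
      nlinarith [Real.exp_le_one_iff.mpr (by linarith : -u ≤ 0)]
    rw [Real.norm_eq_abs, abs_of_nonneg (by positivity)]
    calc u ^ (-H - 1) * (1 - Real.exp (-u)) ≤ u ^ (-H - 1) * u := by
          exact mul_le_mul_of_nonneg_left h1 (by positivity)
      _ = u ^ (-H) := by
          rw [← Real.rpow_add_one hu0.ne' (-H-1)]; norm_num
  have h1i : IntegrableOn (fun u : ℝ => u ^ (-H - 1) * (1 - Real.exp (-u))) (Ioi 1) := by
    have hg : IntegrableOn (fun u : ℝ => u ^ (-H - 1)) (Ioi (1:ℝ)) :=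
      integrableOn_Ioi_rpow_of_lt (by linarith) one_pos
    refine Integrable.mono' hg (hmeas.mono_measure (Measure.restrict_mono (Ioi_subset_Ioi zero_le_one) le_rfl)) ?_
    filter_upwards [ae_restrict_mem measurableSet_Ioi] with u hu
    have hu0 : (0:ℝ) < u := lt_trans one_pos hu
    have h2 : 0 ≤ 1 - Real.exp (-u) := by
      nlinarith [Real.exp_le_one_iff.mpr (by linarith : -u ≤ 0)]
    have h3 : 1 - Real.exp (-u) ≤ 1 := by nlinarith [Real.exp_pos (-u)]
    rw [Real.norm_eq_abs, abs_of_nonneg (by positivity)]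
    calc u ^ (-H - 1) * (1 - Real.exp (-u)) ≤ u ^ (-H - 1) * 1 :=
          mul_le_mul_of_nonneg_left h3 (by positivity)
      _ = u ^ (-H - 1) := mul_one _
  rw [← Ioc_union_Ioi_eq_Ioi (zero_le_one : (0:ℝ) ≤ 1)]
  exact h01.union h1i

lemma valM {H : ℝ} (hH0 : 0 < H) (hH1 : H < 1) :
    ∫ u in Ioi (0:ℝ), u ^ (-H - 1) * (1 - Real.exp (-u)) = Real.Gamma (1 - H) / H := by
  set F : ℝ → ℝ := fun u => -(1/H) * (u ^ (-H) * (1 - Real.exp (-u))) with hF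
  set f' : ℝ → ℝ := fun u =>
    u ^ (-H - 1) * (1 - Real.exp (-u)) - (1/H) * (u ^ (-H) * Real.exp (-u)) with hf'
  have hG : IntegrableOn (fun u : ℝ => (1/H) * (u ^ (-H) * Real.exp (-u))) (Ioi 0) := by
    have h := (Real.GammaIntegral_convergent (s := 1 - H) (by linarith)).const_mul (1/H)
    refine IntegrableOn.congr_fun h (fun u hu => ?_) measurableSet_Ioi
    rw [show (1:ℝ) - H - 1 = -H by ring]; ring
  have f'int : IntegrableOn f' (Ioi 0) := (intM hH0 hH1).sub hG
  have hderiv : ∀ u ∈ Ioi (0:ℝ), HasDerivAt F (f' u) u := by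
    intro u hu
    have hu0 : (0:ℝ) < u := hu
    have h1 : HasDerivAt (fun u : ℝ => u ^ (-H)) (-H * u ^ (-H - 1)) u :=
      Real.hasDerivAt_rpow_const (Or.inl hu0.ne')
    have h2 : HasDerivAt (fun u : ℝ => 1 - Real.exp (-u)) (Real.exp (-u)) u := by
      have := ((hasDerivAt_neg u).exp).const_sub 1
      simpa using this
    have := ((h1.mul h2).const_mul (-(1/H)))
    refine HasDerivAt.congr_deriv this ?_
    rw [hf']
    field_simp
    ring
  have hcont : ContinuousWithinAt F (Ici 0) 0 := by
    rw [ContinuousWithinAt]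
    have hF0 : F 0 = 0 := by
      simp [hF]
    rw [hF0]
    have hG : Tendsto (fun u : ℝ => u ^ (-H) * (1 - Real.exp (-u))) (𝓝[Ici 0] 0) (𝓝 0) := by
      apply squeeze_zero' (g := fun u : ℝ => u ^ (1 - H)) ?_ ?_ ?_
      · filter_upwards [self_mem_nhdsWithin] with u hu
        have hu' : (0:ℝ) ≤ u := hu
        have he : Real.exp (-u) ≤ 1 := Real.exp_le_one_iff.mpr (by linarith)
        exact mul_nonneg (Real.rpow_nonneg hu' _) (by linarith)
      · filter_upwards [self_mem_nhdsWithin] with u hu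
        rcases eq_or_lt_of_le (mem_Ici.mp hu) with h | h
        · simp [← h, Real.zero_rpow (by linarith : -H ≠ 0),
            Real.zero_rpow (by linarith : 1 - H ≠ 0)]
        · have h1 : 1 - Real.exp (-u) ≤ u := by nlinarith [Real.add_one_le_exp (-u)]
          calc u ^ (-H) * (1 - Real.exp (-u)) ≤ u ^ (-H) * u :=
                mul_le_mul_of_nonneg_left h1 (by positivity)
            _ = u ^ (1 - H) := by
                rw [← Real.rpow_add_one (ne_of_gt h) (-H)]; ring_nf
      · have h0 : (0:ℝ) ^ (1 - H) = 0 := Real.zero_rpow (by linarith)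
        have hc : ContinuousWithinAt (fun u : ℝ => u ^ (1 - H)) (Ici 0) 0 :=
          (Real.continuousAt_rpow_const 0 (1 - H) (Or.inr (by linarith))).continuousWithinAt
        rw [ContinuousWithinAt, h0] at hc
        exact hc
    simpa only [mul_zero] using hG.const_mul (-(1/H))
  have hlim : Tendsto F atTop (𝓝 0) := by
    have h1 : Tendsto (fun u : ℝ => u ^ (-H)) atTop (𝓝 0) := tendsto_rpow_neg_atTop hH0
    have h2 : Tendsto (fun u : ℝ => 1 - Real.exp (-u)) atTop (𝓝 1) := by
      simpa using (tendsto_exp_neg_atTop_nhds_zero.const_sub 1)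
    simpa only [zero_mul, mul_zero] using (h1.mul h2).const_mul (-(1/H))
  have key := integral_Ioi_of_hasDerivAt_of_tendsto (a := 0) (m := 0) hcont hderiv f'int hlim
  have hF0 : F 0 = 0 := by simp [hF]
  rw [hF0, sub_zero] at key
  have split : ∫ u in Ioi (0:ℝ), f' u =
      (∫ u in Ioi (0:ℝ), u ^ (-H - 1) * (1 - Real.exp (-u))) -
        ∫ u in Ioi (0:ℝ), (1/H) * (u ^ (-H) * Real.exp (-u)) :=
    integral_sub (intM hH0 hH1) hG
  have hGval : ∫ u in Ioi (0:ℝ), (1/H) * (u ^ (-H) * Real.exp (-u)) = Real.Gamma (1 - H) / H := by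
    rw [integral_const_mul]
    rw [Real.Gamma_eq_integral (by linarith : (0:ℝ) < 1 - H)]
    have : ∀ u ∈ Ioi (0:ℝ), Real.exp (-u) * u ^ (1 - H - 1) = u ^ (-H) * Real.exp (-u) := by
      intro u hu; rw [show (1:ℝ) - H - 1 = -H by ring]; ring
    rw [setIntegral_congr_fun measurableSet_Ioi this]
    ring
  rw [split, hGval] at key
  linarith

lemma intT {H c : ℝ} (hH0 : 0 < H) (hH1 : H < 1) (hc : 0 < c) :
    IntegrableOn (fun t : ℝ => t ^ (H - 1) * (1 - Real.exp (-(c / t)))) (Ioi 0) := by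
  have hmeas : AEStronglyMeasurable (fun t : ℝ => t ^ (H - 1) * (1 - Real.exp (-(c / t))))
      (volume.restrict (Ioi (0:ℝ))) := by
    apply Measurable.aestronglyMeasurable; fun_prop
  have h01 : IntegrableOn (fun t : ℝ => t ^ (H - 1) * (1 - Real.exp (-(c / t)))) (Ioc 0 1) := by
    have hg : IntegrableOn (fun t : ℝ => t ^ (H - 1)) (Ioc (0:ℝ) 1) := by
      rw [← intervalIntegrable_iff_integrableOn_Ioc_of_le zero_le_one]
      exact intervalIntegral.intervalIntegrable_rpow' (by linarith)
    refine Integrable.mono' hg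
      (hmeas.mono_measure (Measure.restrict_mono Ioc_subset_Ioi_self le_rfl)) ?_
    filter_upwards [ae_restrict_mem measurableSet_Ioc] with t ht
    have ht0 : 0 < t := ht.1
    have hct : 0 ≤ c / t := by positivity
    have h2 : 0 ≤ 1 - Real.exp (-(c / t)) :=
      by nlinarith [Real.exp_le_one_iff.mpr (by linarith : -(c/t) ≤ 0)]
    have h3 : 1 - Real.exp (-(c / t)) ≤ 1 := by nlinarith [Real.exp_pos (-(c/t))]
    rw [Real.norm_eq_abs, abs_of_nonneg (by positivity)]
    calc t ^ (H - 1) * (1 - Real.exp (-(c / t))) ≤ t ^ (H - 1) * 1 :=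
          mul_le_mul_of_nonneg_left h3 (by positivity)
      _ = t ^ (H - 1) := mul_one _
  have h1i : IntegrableOn (fun t : ℝ => t ^ (H - 1) * (1 - Real.exp (-(c / t)))) (Ioi 1) := by
    have hg : IntegrableOn (fun t : ℝ => c * t ^ (H - 2)) (Ioi (1:ℝ)) :=
      (integrableOn_Ioi_rpow_of_lt (by linarith) one_pos).const_mul c
    refine Integrable.mono' hg
      (hmeas.mono_measure (Measure.restrict_mono (Ioi_subset_Ioi zero_le_one) le_rfl)) ?_
    filter_upwards [ae_restrict_mem measurableSet_Ioi] with t ht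
    have ht0 : (0:ℝ) < t := lt_trans one_pos ht
    have h2 : 0 ≤ 1 - Real.exp (-(c / t)) :=
      by nlinarith [Real.exp_le_one_iff.mpr (neg_nonpos.mpr (by positivity) : -(c/t) ≤ 0)]
    have h1 : 1 - Real.exp (-(c / t)) ≤ c / t := by nlinarith [Real.add_one_le_exp (-(c/t))]
    rw [Real.norm_eq_abs, abs_of_nonneg (by positivity)]
    calc t ^ (H - 1) * (1 - Real.exp (-(c / t))) ≤ t ^ (H - 1) * (c / t) :=
          mul_le_mul_of_nonneg_left h1 (by positivity)
      _ = c * t ^ (H - 2) := by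
          rw [div_eq_mul_inv, ← Real.rpow_neg_one t, ← mul_assoc, mul_comm _ c, mul_assoc,
            ← Real.rpow_add ht0, show H - 1 + -1 = H - 2 by ring]
  rw [← Ioc_union_Ioi_eq_Ioi (zero_le_one : (0:ℝ) ≤ 1)]
  exact h01.union h1i

lemma valT {H c : ℝ} (hH0 : 0 < H) (hH1 : H < 1) (hc : 0 < c) :
    ∫ t in Ioi (0:ℝ), t ^ (H - 1) * (1 - Real.exp (-(c / t)))
      = c ^ H * (Real.Gamma (1 - H) / H) := by
  -- substitution t = x⁻¹
  have step1 : ∫ t in Ioi (0:ℝ), t ^ (H - 1) * (1 - Real.exp (-(c / t)))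
      = ∫ x in Ioi (0:ℝ), x ^ (-H - 1) * (1 - Real.exp (-(c * x))) := by
    have := integral_comp_rpow_Ioi (fun y : ℝ => y ^ (H - 1) * (1 - Real.exp (-(c / y))))
      (p := -1) (by norm_num)
    rw [← this]
    refine setIntegral_congr_fun measurableSet_Ioi (fun x hx => ?_)
    have hx0 : (0:ℝ) < x := hx
    have hinv : x ^ (-1 : ℝ) = x⁻¹ := Real.rpow_neg_one x
    rw [smul_eq_mul]
    rw [← Real.rpow_mul hx0.le, hinv, div_inv_eq_mul, abs_neg, abs_one, one_mul,
      ← mul_assoc, ← Real.rpow_add hx0, show (-1:ℝ) - 1 + -1 * (H - 1) = -H - 1 by ring]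
  rw [step1]
  have step2 := integral_comp_mul_left_Ioi
    (fun s : ℝ => s ^ (-H - 1) * (1 - Real.exp (-s))) 0 hc
  simp only [mul_zero, smul_eq_mul] at step2
  have congr2 : ∀ x ∈ Ioi (0:ℝ), (fun s : ℝ => s ^ (-H - 1) * (1 - Real.exp (-s))) (c * x)
      = c ^ (-H - 1) * (x ^ (-H - 1) * (1 - Real.exp (-(c * x)))) := by
    intro x hx
    simp only
    rw [Real.mul_rpow hc.le (le_of_lt hx)]; ring
  rw [setIntegral_congr_fun measurableSet_Ioi congr2, integral_const_mul, valM hH0 hH1] at step2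
  have hne : c ^ (-H - 1) ≠ 0 := (Real.rpow_pos_of_pos hc _).ne'
  have hch : (c ^ (-H - 1))⁻¹ * c⁻¹ = c ^ H := by
    rw [← Real.rpow_neg hc.le, ← Real.rpow_neg_one c, ← Real.rpow_add hc,
      show -(-H - 1) + -1 = H by ring]
  have h2 := congrArg (fun z => (c ^ (-H - 1))⁻¹ * z) step2
  simp only [← mul_assoc, inv_mul_cancel₀ hne, one_mul] at h2
  rw [h2, hch]

lemma gauss_int {t : ℝ} (ht : 0 < t) :
    Integrable (fun p : E => Real.exp (-(t * ‖p‖ ^ 2))) := by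
  have h := (GaussianFourier.integrable_cexp_neg_mul_sq_norm_add (V := E)
    (b := (t:ℂ)) (by simpa using ht) 0 (0:E)).norm
  refine h.congr (Filter.Eventually.of_forall fun p => ?_)
  show ‖Complex.exp (-(t:ℂ) * (‖p‖:ℂ)^2 + 0 * ((⟪(0:E), p⟫ : ℝ):ℂ))‖ = Real.exp (-(t * ‖p‖^2))
  have harg : (-(t:ℂ) * (‖p‖:ℂ)^2 + 0 * ((⟪(0:E), p⟫ : ℝ):ℂ)) = ((-(t*‖p‖^2) : ℝ):ℂ) := by
    push_cast; ring
  rw [harg, Complex.norm_exp_ofReal]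

lemma gauss_val {t : ℝ} (ht : 0 < t) :
    ∫ p : E, Real.exp (-(t * ‖p‖ ^ 2)) = (π / t) ^ ((n : ℝ) / 2) := by
  have := GaussianFourier.integral_rexp_neg_mul_sq_norm (V := E) ht
  simp only [finrank_euclideanSpace_fin] at this
  rw [← this]
  congr 1 with p
  rw [neg_mul]

lemma gausscos_int {t : ℝ} (ht : 0 < t) (x : E) :
    Integrable (fun p : E => Real.cos ⟪p, x⟫ * Real.exp (-(t * ‖p‖ ^ 2))) := by
  have hc : Continuous fun p : E => Real.cos ⟪p, x⟫ * Real.exp (-(t * ‖p‖ ^ 2)) :=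
    (Real.continuous_cos.comp (continuous_id.inner continuous_const)).mul
      (Real.continuous_exp.comp ((continuous_const.mul ((continuous_norm).pow 2)).neg))
  refine (gauss_int ht).mono' hc.aestronglyMeasurable (Filter.Eventually.of_forall fun p => ?_)
  rw [Real.norm_eq_abs, abs_mul]
  calc |Real.cos ⟪p,x⟫| * |Real.exp (-(t * ‖p‖^2))|
      ≤ 1 * |Real.exp (-(t * ‖p‖^2))| :=
        mul_le_mul_of_nonneg_right (Real.abs_cos_le_one _) (abs_nonneg _)
    _ = Real.exp (-(t * ‖p‖^2)) := by rw [one_mul, abs_of_pos (Real.exp_pos _)]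

lemma gausscos_val {t : ℝ} (ht : 0 < t) (x : E) :
    ∫ p : E, Real.cos ⟪p, x⟫ * Real.exp (-(t * ‖p‖ ^ 2))
      = (π / t) ^ ((n : ℝ) / 2) * Real.exp (-(‖x‖ ^ 2 / (4 * t))) := by
  have ht' : 0 < ((t:ℂ)).re := by simpa using ht
  have hI := GaussianFourier.integrable_cexp_neg_mul_sq_norm_add (V := E) ht' Complex.I x
  have h := GaussianFourier.integral_cexp_neg_mul_sq_norm_add (V := E) ht' Complex.I x
  have hre := integral_re hI
  rw [h] at hre
  have lhs_eq : ∫ p : E, Real.cos ⟪p, x⟫ * Real.exp (-(t * ‖p‖ ^ 2))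
      = ∫ v : E, RCLike.re (Complex.exp (-(t:ℂ) * (‖v‖:ℂ) ^ 2 + Complex.I * ((⟪x, v⟫ : ℝ):ℂ))) := by
    refine integral_congr_ae (Filter.Eventually.of_forall fun v => ?_)
    show Real.cos ⟪v, x⟫ * Real.exp (-(t * ‖v‖ ^ 2))
      = RCLike.re (Complex.exp (-(t:ℂ) * (‖v‖:ℂ) ^ 2 + Complex.I * ((⟪x, v⟫ : ℝ):ℂ)))
    rw [RCLike.re_to_complex, Complex.exp_re]
    have h1 : (-(t:ℂ) * (‖v‖:ℂ) ^ 2 + Complex.I * ((⟪x, v⟫ : ℝ):ℂ)).re = -(t * ‖v‖^2) := by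
      simp [← Complex.ofReal_pow]
    have h2 : (-(t:ℂ) * (‖v‖:ℂ) ^ 2 + Complex.I * ((⟪x, v⟫ : ℝ):ℂ)).im = ⟪x, v⟫ := by
      simp [← Complex.ofReal_pow]
    rw [h1, h2, real_inner_comm]
    ring
  rw [lhs_eq, hre]
  have ecast : ((n:ℂ))/2 = ((((n:ℝ)/2):ℝ):ℂ) := by push_cast; ring
  have e1 : ((π:ℂ) / (t:ℂ)) ^ (((Module.finrank ℝ (EuclideanSpace ℝ (Fin n))):ℂ) / 2)
      = (((π / t) ^ ((n:ℝ)/2) : ℝ) : ℂ) := by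
    rw [finrank_euclideanSpace_fin, ← Complex.ofReal_div, ecast,
      ← Complex.ofReal_cpow (by positivity)]
  have harg : (Complex.I ^ 2 * (‖x‖:ℂ) ^ 2 / (4 * (t:ℂ))) = ((-(‖x‖^2/(4*t)) : ℝ):ℂ) := by
    rw [Complex.I_sq]; push_cast; ring
  rw [e1, harg, ← Complex.ofReal_exp, RCLike.re_to_complex, ← Complex.ofReal_mul,
    Complex.ofReal_re]

end SpectralAux

/-- For `0 < H < 1`, `N ≥ 2` and `x ≠ 0` in `ℝ^N`,
`c²_{HN} ∫_{ℝ^N} (1 - cos⟨p,x⟩) ‖p‖^{-N-2H} dp = ‖x‖^{2H}/2`, where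
`c²_{HN} = 2^{2H-1} Γ(H+N/2) Γ(H+1) sin(πH) / π^{(N+2)/2}`. -/
theorem spectral_integral_eq (N : ℕ) (hN : 2 ≤ N) (H : ℝ) (hH0 : 0 < H) (hH1 : H < 1)
    (x : EuclideanSpace ℝ (Fin N)) (hx : x ≠ 0) :
    (2 ^ (2 * H - 1) * Real.Gamma (H + N / 2) * Real.Gamma (H + 1) * Real.sin (π * H)
        / π ^ (((N : ℝ) + 2) / 2))
      * ∫ p : EuclideanSpace ℝ (Fin N),
          (1 - Real.cos (inner ℝ p x : ℝ)) * ‖p‖ ^ (-(N : ℝ) - 2 * H)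
    = ‖x‖ ^ (2 * H) / 2 := by
  have ha : (0:ℝ) < ‖x‖ := norm_pos_iff.mpr hx
  set c : ℝ := ‖x‖ ^ 2 / 4 with hcdef
  have hc : 0 < c := by positivity
  have hs : (0:ℝ) < H + (N:ℝ)/2 := by positivity
  set f : ℝ → EuclideanSpace ℝ (Fin N) → ℝ :=
    fun t p => t ^ (H + (N:ℝ)/2 - 1) * ((1 - Real.cos ⟪p, x⟫) * Real.exp (-(t * ‖p‖ ^ 2)))
    with hfdef
  -- inner integral over p, for t > 0
  have hInner : ∀ t ∈ Ioi (0:ℝ),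
      (∫ p : EuclideanSpace ℝ (Fin N), f t p) = π ^ ((N:ℝ)/2) * (t ^ (H - 1) * (1 - Real.exp (-(c / t)))) := by
    intro t ht
    have ht0 : (0:ℝ) < t := ht
    have hsub : ∫ p : EuclideanSpace ℝ (Fin N), (1 - Real.cos ⟪p,x⟫) * Real.exp (-(t * ‖p‖^2))
        = (∫ p : EuclideanSpace ℝ (Fin N), Real.exp (-(t * ‖p‖^2)))
          - ∫ p : EuclideanSpace ℝ (Fin N), Real.cos ⟪p,x⟫ * Real.exp (-(t * ‖p‖^2)) := by
      rw [← integral_sub (gauss_int ht0) (gausscos_int ht0 x)]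
      congr 1 with p
      ring
    have hstep : (∫ p : EuclideanSpace ℝ (Fin N), f t p)
        = t ^ (H + (N:ℝ)/2 - 1) * ∫ p : EuclideanSpace ℝ (Fin N), (1 - Real.cos ⟪p,x⟫) * Real.exp (-(t * ‖p‖^2)) := by
      rw [hfdef, integral_const_mul]
    rw [hstep, hsub, gauss_val ht0, gausscos_val ht0 x]
    have h1 : (π/t) ^ ((N:ℝ)/2) = π ^ ((N:ℝ)/2) * t ^ (-((N:ℝ)/2)) := by
      rw [Real.div_rpow pi_pos.le ht0.le, Real.rpow_neg ht0.le, div_eq_mul_inv]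
    have h2 : t ^ (H + (N:ℝ)/2 - 1) * t ^ (-((N:ℝ)/2)) = t ^ (H - 1) := by
      rw [← Real.rpow_add ht0]
      congr 1
      ring
    have h3 : ‖x‖ ^ 2 / (4 * t) = c / t := by
      rw [hcdef, div_div]
    rw [h1, h3]
    calc t ^ (H + (N:ℝ)/2 - 1) * (π ^ ((N:ℝ)/2) * t ^ (-((N:ℝ)/2))
            - π ^ ((N:ℝ)/2) * t ^ (-((N:ℝ)/2)) * Real.exp (-(c / t)))
        = π ^ ((N:ℝ)/2) * ((t ^ (H + (N:ℝ)/2 - 1) * t ^ (-((N:ℝ)/2))) * (1 - Real.exp (-(c / t)))) := by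
          ring
      _ = π ^ ((N:ℝ)/2) * (t ^ (H - 1) * (1 - Real.exp (-(c / t)))) := by rw [h2]
  -- pointwise Gamma formula in p
  have hpt : ∀ p : EuclideanSpace ℝ (Fin N),
      (1 - Real.cos ⟪p, x⟫) * ‖p‖ ^ (-(N:ℝ) - 2 * H) * Real.Gamma (H + (N:ℝ)/2)
        = ∫ t in Ioi (0:ℝ), f t p := by
    intro p
    by_cases hp : p = 0
    · subst hp
      simp [hfdef]
    · have hp0 : (0:ℝ) < ‖p‖ := norm_pos_iff.mpr hp
      have hre : ∀ t ∈ Ioi (0:ℝ), f t p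
          = (1 - Real.cos ⟪p,x⟫) * (t ^ (H + (N:ℝ)/2 - 1) * Real.exp (-(‖p‖^2 * t))) := by
        intro t _
        simp only [hfdef]
        rw [mul_comm (t:ℝ) (‖p‖^2)]
        ring
      rw [setIntegral_congr_fun measurableSet_Ioi hre, integral_const_mul,
        integral_rpow_mul_exp_neg_mul_Ioi hs (by positivity : (0:ℝ) < ‖p‖^2)]
      have hnorm : (1 / ‖p‖^2) ^ (H + (N:ℝ)/2) = ‖p‖ ^ (-(N:ℝ) - 2*H) := by
        rw [one_div, ← Real.rpow_natCast ‖p‖ 2, ← Real.rpow_neg (norm_nonneg p),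
          ← Real.rpow_mul (norm_nonneg p)]
        norm_num
        congr 1
        ring
      rw [hnorm]
      ring
  -- measurability of the uncurried function
  have hmeas : AEStronglyMeasurable (Function.uncurry f)
      (((volume : Measure ℝ).restrict (Ioi 0)).prod (volume : Measure (EuclideanSpace ℝ (Fin N)))) := by
    apply Measurable.aestronglyMeasurable
    have h1 : Measurable fun q : ℝ × EuclideanSpace ℝ (Fin N) => q.1 ^ (H + (N:ℝ)/2 - 1) := by fun_prop
    have h2 : Continuous fun q : ℝ × EuclideanSpace ℝ (Fin N) =>
        (1 - Real.cos ⟪q.2, x⟫) * Real.exp (-(q.1 * ‖q.2‖ ^ 2)) :=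
      ((continuous_const.sub (Real.continuous_cos.comp
          (continuous_snd.inner continuous_const))).mul
        (Real.continuous_exp.comp ((continuous_fst.mul ((continuous_snd.norm).pow 2)).neg)))
    exact h1.mul h2.measurable
  -- integrability on the product
  have hint : Integrable (Function.uncurry f)
      (((volume : Measure ℝ).restrict (Ioi 0)).prod (volume : Measure (EuclideanSpace ℝ (Fin N)))) := by
    rw [integrable_prod_iff hmeas]
    constructor
    · filter_upwards [ae_restrict_mem measurableSet_Ioi] with t ht
      have ht0 : (0:ℝ) < t := ht
      have hb : Integrable (fun p : EuclideanSpace ℝ (Fin N) => t ^ (H + (N:ℝ)/2 - 1)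
          * (2 * Real.exp (-(t * ‖p‖^2)))) :=
        ((gauss_int ht0).const_mul 2).const_mul _
      have hcont : Continuous fun p : EuclideanSpace ℝ (Fin N) => f t p := by
        rw [hfdef]
        exact ((continuous_const).mul
          (((continuous_const.sub (Real.continuous_cos.comp
              (continuous_id.inner continuous_const)))).mul
            (Real.continuous_exp.comp ((continuous_const.mul ((continuous_norm).pow 2)).neg))))
      refine hb.mono' hcont.aestronglyMeasurable (Filter.Eventually.of_forall fun p => ?_)
      show ‖f t p‖ ≤ _
      rw [hfdef]
      simp only
      rw [Real.norm_eq_abs, abs_mul, abs_mul,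
        abs_of_nonneg (Real.rpow_nonneg ht0.le _), abs_of_pos (Real.exp_pos _)]
      have hcos : |1 - Real.cos ⟪p,x⟫| ≤ 2 := by
        rw [abs_le]
        constructor <;> nlinarith [Real.neg_one_le_cos ⟪p,x⟫, Real.cos_le_one ⟪p,x⟫]
      have := mul_le_mul_of_nonneg_right
        (mul_le_mul_of_nonneg_left hcos (Real.rpow_nonneg ht0.le (H + (N:ℝ)/2 - 1)))
        (Real.exp_pos (-(t * ‖p‖^2))).le
      calc t ^ (H + (N:ℝ)/2 - 1) * (|1 - Real.cos ⟪p,x⟫| * Real.exp (-(t * ‖p‖^2)))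
          ≤ t ^ (H + (N:ℝ)/2 - 1) * (2 * Real.exp (-(t * ‖p‖^2))) := by nlinarith [Real.exp_pos (-(t * ‖p‖^2)), Real.rpow_nonneg ht0.le (H + (N:ℝ)/2 - 1), abs_nonneg (1 - Real.cos ⟪p,x⟫)]
        _ = _ := rfl
    · have hg : Integrable (fun t : ℝ => π ^ ((N:ℝ)/2)
          * (t ^ (H-1) * (1 - Real.exp (-(c / t)))))
          ((volume : Measure ℝ).restrict (Ioi 0)) :=
        (intT hH0 hH1 hc).const_mul _
      refine hg.congr ?_
      filter_upwards [ae_restrict_mem measurableSet_Ioi] with t ht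
      have ht0 : (0:ℝ) < t := ht
      have hnonneg : ∀ p : EuclideanSpace ℝ (Fin N), 0 ≤ f t p := by
        intro p
        rw [hfdef]
        have : Real.cos ⟪p,x⟫ ≤ 1 := Real.cos_le_one _
        have h1 : (0:ℝ) ≤ 1 - Real.cos ⟪p,x⟫ := by linarith
        positivity
      have : ∫ p : EuclideanSpace ℝ (Fin N), ‖f t p‖ = ∫ p : EuclideanSpace ℝ (Fin N), f t p :=
        integral_congr_ae (Filter.Eventually.of_forall fun p =>
          Real.norm_of_nonneg (hnonneg p))
      rw [eq_comm]
      show ∫ p : EuclideanSpace ℝ (Fin N), ‖Function.uncurry f (t, p)‖ = _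
      simp only [Function.uncurry_apply_pair]
      rw [this, hInner t ht]
  -- the main chain
  set J := ∫ p : EuclideanSpace ℝ (Fin N), (1 - Real.cos (inner ℝ p x : ℝ)) * ‖p‖ ^ (-(N:ℝ) - 2*H) with hJdef
  have chain : Real.Gamma (H + (N:ℝ)/2) * J
      = π ^ ((N:ℝ)/2) * (c ^ H * (Real.Gamma (1 - H) / H)) := by
    have h1 : Real.Gamma (H + (N:ℝ)/2) * J
        = ∫ p : EuclideanSpace ℝ (Fin N), (1 - Real.cos ⟪p,x⟫) * ‖p‖ ^ (-(N:ℝ) - 2*H) * Real.Gamma (H + (N:ℝ)/2) := by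
      rw [mul_comm, hJdef, ← integral_mul_const]
    rw [h1, integral_congr_ae (Filter.Eventually.of_forall hpt),
      ← integral_integral_swap hint,
      setIntegral_congr_fun measurableSet_Ioi hInner,
      integral_const_mul, valT hH0 hH1 hc]
  have hGs : (0:ℝ) < Real.Gamma (H + (N:ℝ)/2) := Real.Gamma_pos_of_pos hs
  have hsin : 0 < Real.sin (π * H) := Real.sin_pos_of_pos_of_lt_pi (by positivity)
    (by nlinarith [Real.pi_pos])
  have hrefl : Real.Gamma H * Real.Gamma (1 - H) * Real.sin (π * H) = π := by
    rw [Real.Gamma_mul_Gamma_one_sub H]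
    field_simp
  have hG1 : Real.Gamma (H + 1) = H * Real.Gamma H := Real.Gamma_add_one hH0.ne'
  have hpi2 : π ^ (((N:ℝ) + 2)/2) = π ^ ((N:ℝ)/2) * π := by
    rw [show ((N:ℝ)+2)/2 = (N:ℝ)/2 + 1 by ring, Real.rpow_add Real.pi_pos, Real.rpow_one]
  have hch : c ^ H = ‖x‖ ^ (2*H) / (2:ℝ) ^ (2*H) := by
    rw [hcdef, show (4:ℝ) = 2^(2:ℕ) by norm_num, Real.div_rpow (by positivity) (by positivity),
      ← Real.rpow_natCast ‖x‖ 2, ← Real.rpow_natCast (2:ℝ) 2,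
      ← Real.rpow_mul (norm_nonneg x), ← Real.rpow_mul (by norm_num : (0:ℝ) ≤ 2)]
    norm_num
  have h2h : (2:ℝ) ^ (2*H - 1) = (2:ℝ) ^ (2*H) / 2 := by
    rw [Real.rpow_sub two_pos, Real.rpow_one]
  have hJ : J = π ^ ((N:ℝ)/2) * (c ^ H * (Real.Gamma (1-H)/H)) / Real.Gamma (H + (N:ℝ)/2) := by
    rw [eq_div_iff hGs.ne', mul_comm J]
    exact chain
  rw [hJ, hch, hG1, hpi2, h2h]
  have hpineg : π^((N:ℝ)/2) ≠ 0 := by positivity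
  have h2ne : (2:ℝ)^(2*H) ≠ 0 := by positivity
  field_simp
  rw [mul_comm H π]
  linear_combination hrefl
end
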